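/- For every s > 0, f is twice differentiable at s and f'(s) + s·f''(s) = (α + log(1+s))^β / (α^β·(1+s)); in particular f'(s) + s·f''(s) > 0. -/

import Mathlib

open Real

noncomputable def fFJ (α β : ℝ) (s : ℝ) : ℝ :=
  (1 / ((β + 1) * α ^ β)) * ∫ x in (0:ℝ)..s, ((α + Real.log (1 + x)) ^ (β + 1) - α ^ (β + 1)) / x

theorem stmt_1 (α β : ℝ) (hβ : 0 ≤ β) (hαβ : β < α) (s : ℝ) (hs : 0 < s) :
    DifferentiableAt ℝ (fFJ α β) s ∧
    DifferentiableAt ℝ (deriv (fFJ α β)) s ∧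
    deriv (fFJ α β) s + s * deriv (deriv (fFJ α β)) s
      = (α + Real.log (1 + s)) ^ β / (α ^ β * (1 + s)) ∧
    0 < deriv (fFJ α β) s + s * deriv (deriv (fFJ α β)) s := by
  have hα : 0 < α := lt_of_le_of_lt hβ hαβ
  set c : ℝ := 1 / ((β + 1) * α ^ β) with hc
  set F : ℝ → ℝ := fun x => (α + Real.log (1 + x)) ^ (β + 1) with hF
  set g : ℝ → ℝ := fun x => (F x - α ^ (β + 1)) / x with hg
  have hfFJ : fFJ α β = fun u => c * ∫ x in (0:ℝ)..u, g x := rfl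
  have hF' : ∀ x : ℝ, 0 < 1 + x →
      HasDerivAt F ((β + 1) * (α + Real.log (1 + x)) ^ β / (1 + x)) x := by
    intro x hx
    have h1 : HasDerivAt (fun y : ℝ => 1 + y) 1 x := (hasDerivAt_id x).const_add 1
    have h2 : HasDerivAt (fun y : ℝ => Real.log (1 + y)) (1 / (1 + x)) x := h1.log hx.ne'
    have h3 : HasDerivAt (fun y : ℝ => α + Real.log (1 + y)) (1 / (1 + x)) x := h2.const_add α
    have h4 := h3.rpow_const (p := β + 1) (Or.inr (by linarith))
    rw [hF]
    convert h4 using 1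
    rw [add_sub_cancel_right]
    ring
  have hF0 : F 0 = α ^ (β + 1) := by simp [hF]
  have hd0 : HasDerivAt F ((β + 1) * α ^ β) 0 := by
    have := hF' 0 (by norm_num)
    simpa using this
  have hgc : ContinuousOn g (Set.Ioi 0) := by
    intro x hx
    have hx0 : (0:ℝ) < x := hx
    have hFc : ContinuousAt F x := (hF' x (by linarith)).continuousAt
    exact (((hFc.sub continuousAt_const).div continuousAt_id hx0.ne')).continuousWithinAt
  have hslope : Filter.Tendsto g (nhdsWithin 0 {(0:ℝ)}ᶜ) (nhds ((β + 1) * α ^ β)) := by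
    have h := hasDerivAt_iff_tendsto_slope.mp hd0
    refine h.congr (fun x => ?_)
    simp [slope_def_field, hg, hF0, sub_zero]
  have hint : ∀ t : ℝ, 0 < t → IntervalIntegrable g MeasureTheory.volume 0 t := by
    intro t ht
    set G : ℝ → ℝ := fun x => if x = 0 then (β + 1) * α ^ β else g x with hGdef
    have hG0 : G 0 = (β + 1) * α ^ β := by simp [hGdef]
    have hGc : ContinuousOn G (Set.Icc 0 t) := by
      intro x hx
      rcases eq_or_ne x 0 with rfl | hx0
      · have h1 : Filter.Tendsto G (nhdsWithin 0 {(0:ℝ)}ᶜ) (nhds ((β + 1) * α ^ β)) := by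
          refine hslope.congr' ?_
          filter_upwards [self_mem_nhdsWithin] with y hy
          simp [hGdef, Set.mem_compl_singleton_iff.mp hy]
        have h2 : Filter.Tendsto G (pure (0:ℝ)) (nhds ((β + 1) * α ^ β)) := by
          have := tendsto_pure_nhds G 0
          rwa [hG0] at this
        have hca : ContinuousAt G 0 := by
          rw [ContinuousAt, hG0, ← nhdsNE_sup_pure (0:ℝ)]
          exact Filter.Tendsto.sup h1 h2
        exact hca.continuousWithinAt
      · have hx0' : 0 < x := lt_of_le_of_ne hx.1 (Ne.symm hx0)
        have hcg : ContinuousAt g x := hgc.continuousAt (Ioi_mem_nhds hx0')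
        have hGg : g =ᶠ[nhds x] G := by
          filter_upwards [(isOpen_compl_singleton (x := (0:ℝ))).mem_nhds hx0] with y hy
          simp [hGdef, Set.mem_compl_singleton_iff.mp hy]
        exact (hcg.congr hGg).continuousWithinAt
    have hGint : IntervalIntegrable G MeasureTheory.volume 0 t := by
      apply ContinuousOn.intervalIntegrable
      rwa [Set.uIcc_of_le ht.le]
    have hIoc : MeasureTheory.IntegrableOn g (Set.Ioc 0 t) := by
      have h1 : MeasureTheory.IntegrableOn G (Set.Ioc 0 t) :=
        (intervalIntegrable_iff_integrableOn_Ioc_of_le ht.le).mp hGint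
      refine h1.congr_fun ?_ measurableSet_Ioc
      intro y hy
      simp only [hGdef]
      rw [if_neg hy.1.ne']
    exact (intervalIntegrable_iff_integrableOn_Ioc_of_le ht.le).mpr hIoc
  have key : ∀ t : ℝ, 0 < t → HasDerivAt (fFJ α β) (c * g t) t := by
    intro t ht
    have hmeas : StronglyMeasurableAtFilter g (nhds t) :=
      hgc.stronglyMeasurableAtFilter isOpen_Ioi t ht
    have h1 : HasDerivAt (fun u => ∫ x in (0:ℝ)..u, g x) (g t) t :=
      intervalIntegral.integral_hasDerivAt_right (hint t ht) hmeas
        (hgc.continuousAt (Ioi_mem_nhds ht))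
    rw [hfFJ]
    exact h1.const_mul c
  have hderiv : ∀ t : ℝ, 0 < t → deriv (fFJ α β) t = c * g t := fun t ht => (key t ht).deriv
  have hev : deriv (fFJ α β) =ᶠ[nhds s] fun t => c * g t := by
    filter_upwards [Ioi_mem_nhds hs] with t ht using hderiv t ht
  have hFs : HasDerivAt F ((β + 1) * (α + Real.log (1 + s)) ^ β / (1 + s)) s :=
    hF' s (by linarith)
  have hgd : HasDerivAt g
      (((β + 1) * (α + Real.log (1 + s)) ^ β / (1 + s) * s - (F s - α ^ (β + 1)) * 1) / s ^ 2)
      s := by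
    have h1 : HasDerivAt (fun x => F x - α ^ (β + 1))
        ((β + 1) * (α + Real.log (1 + s)) ^ β / (1 + s)) s := hFs.sub_const _
    have h2 : HasDerivAt (fun x : ℝ => x) 1 s := hasDerivAt_id s
    exact h1.div h2 hs.ne'
  have hgd' : HasDerivAt (fun t => c * g t)
      (c * (((β + 1) * (α + Real.log (1 + s)) ^ β / (1 + s) * s - (F s - α ^ (β + 1)) * 1) / s ^ 2))
      s := hgd.const_mul c
  have hdiff2 : DifferentiableAt ℝ (deriv (fFJ α β)) s :=
    hev.differentiableAt_iff.mpr hgd'.differentiableAt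
  have hderiv2 : deriv (deriv (fFJ α β)) s
      = c * (((β + 1) * (α + Real.log (1 + s)) ^ β / (1 + s) * s - (F s - α ^ (β + 1)) * 1) / s ^ 2) := by
    rw [hev.deriv_eq]
    exact hgd'.deriv
  have heq : deriv (fFJ α β) s + s * deriv (deriv (fFJ α β)) s
      = (α + Real.log (1 + s)) ^ β / (α ^ β * (1 + s)) := by
    rw [hderiv s hs, hderiv2]
    have h1 : (β:ℝ) + 1 ≠ 0 := by linarith
    have h2 : α ^ β ≠ 0 := (Real.rpow_pos_of_pos hα β).ne'
    have h3 : (1:ℝ) + s ≠ 0 := by linarith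
    simp only [hg, hc, hF]
    field_simp
    ring
  have hpos : 0 < (α + Real.log (1 + s)) ^ β / (α ^ β * (1 + s)) := by
    have hlog : 0 ≤ Real.log (1 + s) := Real.log_nonneg (by linarith)
    exact div_pos (Real.rpow_pos_of_pos (by linarith) β)
      (mul_pos (Real.rpow_pos_of_pos hα β) (by linarith))
  exact ⟨(key s hs).differentiableAt, hdiff2, heq, heq ▸ hpos⟩
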